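/- Let α ∈ (0,1), C > 0, and let u be a function on the closure of B₁⁺, continuously differentiable up to the flat boundary B₁⁰, with u = 0 on B₁⁰ and with normal derivative ∂_d u that is α-Hölder continuous on the closure of B_{3/4}⁺. Suppose that for each i = 1, …, d−1 there is an α-Hölder continuous function H_i : B⁰_{3/4} → ℝ such that |∂_i u(x) − H_i(x₀)·x_d| ≤ C·|x − x₀|^{1+α} for all x ∈ B₁⁺ and x₀ ∈ B⁰_{3/4}. Then the restriction of ∂_d u to B⁰_{3/4} is of class C^{1,α}: for every x₀ ∈ B⁰_{3/4}, every i = 1, …, d−1 and every small h > 0 with x₀ + h·e_i ∈ B⁰_{3/4}, one has |∂_d u(x₀ + h·e_i) − ∂_d u(x₀) − h·H_i(x₀)| ≤ C'·h^{1+α}, where C' depends only on C, α and the Hölder constants of ∂_d u and the H_i; in particular the tangential derivative ∂_i(∂_d u) exists on B⁰_{3/4} and equals H_i. -/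

import Mathlib

open scoped RealInnerProductSpace Classical
open Metric Set

noncomputable section

/-- Euclidean space of dimension `d`. -/
abbrev Euc (d : ℕ) := EuclideanSpace ℝ (Fin d)

variable {d : ℕ}

/-- The Pucci maximal operator `M⁺_{λ,Λ}`, defined through the eigenvalues of a
symmetric (= Hermitian, over `ℝ`) matrix; junk value `0` on non-symmetric matrices. -/
def pucciSup (lam Lam : ℝ) (M : Matrix (Fin d) (Fin d) ℝ) : ℝ :=
  if h : M.IsHermitian then
    ∑ i, (Lam * max (h.eigenvalues i) 0 + lam * min (h.eigenvalues i) 0)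
  else 0

/-- The Pucci minimal operator `M⁻_{λ,Λ}`. -/
def pucciInf (lam Lam : ℝ) (M : Matrix (Fin d) (Fin d) ℝ) : ℝ :=
  if h : M.IsHermitian then
    ∑ i, (lam * max (h.eigenvalues i) 0 + Lam * min (h.eigenvalues i) 0)
  else 0

/-- The Hessian matrix of `φ : ℝ^d → ℝ` at `x`. -/
def hessianMatrix (φ : Euc d → ℝ) (x : Euc d) : Matrix (Fin d) (Fin d) ℝ :=
  Matrix.of fun i j =>
    iteratedFDeriv ℝ 2 φ x ![EuclideanSpace.single i 1, EuclideanSpace.single j 1]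

/-- The viscosity class `S*(λ,Λ,K,L)` on a set `Ω`: `u` satisfies, in the viscosity
sense, `M⁺(D²u) + K|Du| ≥ -L` and `M⁻(D²u) - K|Du| ≤ L` in `Ω`. -/
def InSStar (lam Lam K L : ℝ) (Ω : Set (Euc d)) (u : Euc d → ℝ) : Prop :=
  ∀ x₀ ∈ Ω, ∀ φ : Euc d → ℝ, ContDiffAt ℝ 2 φ x₀ →
    (IsLocalMaxOn (fun x => u x - φ x) Ω x₀ →
      -L ≤ pucciSup lam Lam (hessianMatrix φ x₀) + K * ‖gradient φ x₀‖) ∧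
    (IsLocalMinOn (fun x => u x - φ x) Ω x₀ →
      pucciInf lam Lam (hessianMatrix φ x₀) - K * ‖gradient φ x₀‖ ≤ L)

/-- `u` is a viscosity solution of `F(D²u, Du, x) = f x` in `Ω`. -/
def IsViscositySolution (F : Matrix (Fin d) (Fin d) ℝ → Euc d → Euc d → ℝ)
    (f : Euc d → ℝ) (Ω : Set (Euc d)) (u : Euc d → ℝ) : Prop :=
  ∀ x₀ ∈ Ω, ∀ φ : Euc d → ℝ, ContDiffAt ℝ 2 φ x₀ →
    (IsLocalMaxOn (fun x => u x - φ x) Ω x₀ →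
      f x₀ ≤ F (hessianMatrix φ x₀) (gradient φ x₀) x₀) ∧
    (IsLocalMinOn (fun x => u x - φ x) Ω x₀ →
      F (hessianMatrix φ x₀) (gradient φ x₀) x₀ ≤ f x₀)

/-- Frobenius norm of a matrix. -/
def matNorm (M : Matrix (Fin d) (Fin d) ℝ) : ℝ :=
  Real.sqrt (∑ i, ∑ j, (M i j) ^ 2)

/-- Structure condition (H1): uniform ellipticity with constants `λ, Λ` and Lipschitz
continuity in the gradient variable with constant `K`, together with `F(0,0,x) = 0`. -/
def SatisfiesH1 (lam Lam K : ℝ) (S : Set (Euc d))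
    (F : Matrix (Fin d) (Fin d) ℝ → Euc d → Euc d → ℝ) : Prop :=
  (∀ M N : Matrix (Fin d) (Fin d) ℝ, M.IsHermitian → N.IsHermitian →
    ∀ p q : Euc d, ∀ x ∈ S,
      F M p x - F N q x ≤ pucciSup lam Lam (M - N) + K * ‖p - q‖ ∧
      pucciInf lam Lam (M - N) - K * ‖p - q‖ ≤ F M p x - F N q x) ∧
  ∀ x ∈ S, F 0 0 x = 0

/-- Structure condition (H2): Hölder continuity in `x` with exponent `abar`. -/
def SatisfiesH2 (abar Cbar : ℝ) (S : Set (Euc d))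
    (F : Matrix (Fin d) (Fin d) ℝ → Euc d → Euc d → ℝ) : Prop :=
  ∀ M : Matrix (Fin d) (Fin d) ℝ, M.IsHermitian →
    ∀ p : Euc d, ∀ x ∈ S, ∀ y ∈ S,
      |F M p x - F M p y| ≤ Cbar * ‖x - y‖ ^ abar * (matNorm M + ‖p‖)

/-- The last coordinate `x_d` of a point (junk value `0` when `d = 0`). -/
def lastCoord (x : Euc d) : ℝ :=
  if h : 0 < d then x ⟨d - 1, Nat.sub_lt h Nat.one_pos⟩ else 0

/-- The open upper half ball `B_r⁺ = {|x| < r, x_d > 0}`. -/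
def halfBall (d : ℕ) (r : ℝ) : Set (Euc d) :=
  {x | ‖x‖ < r ∧ 0 < lastCoord x}

/-- The flat boundary part `B_r⁰ = {|x| < r, x_d = 0}`. -/
def flatBall (d : ℕ) (r : ℝ) : Set (Euc d) :=
  {x | ‖x‖ < r ∧ lastCoord x = 0}

/-- The point `e = (0, …, 0, 1/2)`. -/
def ePoint (d : ℕ) : Euc d :=
  if h : 0 < d then EuclideanSpace.single ⟨d - 1, Nat.sub_lt h Nat.one_pos⟩ ((1 : ℝ)/2) else 0

/-- Sup-norm of `u` over a set `s`. -/
def supNormOn (s : Set (Euc d)) (u : Euc d → ℝ) : ℝ :=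
  sSup ((fun x => |u x|) '' s)

/-- Oscillation of `u` over a set `s`. -/
def oscOn (s : Set (Euc d)) (u : Euc d → ℝ) : ℝ :=
  sSup (u '' s) - sInf (u '' s)

/-- A matrix acting on a vector of Euclidean space. -/
def matVec (M : Matrix (Fin d) (Fin d) ℝ) (v : Euc d) : Euc d :=
  (WithLp.equiv 2 (Fin d → ℝ)).symm (M.mulVec ((WithLp.equiv 2 (Fin d → ℝ)) v))

/-- The quadratic form `v ↦ M v · v`. -/
def quadForm (M : Matrix (Fin d) (Fin d) ℝ) (v : Euc d) : ℝ :=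
  ∑ i, ∑ j, M i j * v i * v j

/-- `g` is of class `C^{1,a}` on `s`, with (tangential) gradient `G` and
`C^{1,a}`-norm at most `N`. -/
def C1DataOn (a N : ℝ) (s : Set (Euc d)) (g : Euc d → ℝ) (G : Euc d → Euc d) : Prop :=
  (∀ x ∈ s, |g x| ≤ N ∧ ‖G x‖ ≤ N) ∧
  ∀ x ∈ s, ∀ y ∈ s,
    ‖G x - G y‖ ≤ N * ‖x - y‖ ^ a ∧
    |g x - g y - ⟪G y, x - y⟫| ≤ N * ‖x - y‖ ^ (1 + a)

/-- `g` is of class `C^{2,a}` on `s`, with gradient `G`, Hessian `Hg`, and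
`C^{2,a}`-norm at most `N`. -/
def C2DataOn (a N : ℝ) (s : Set (Euc d)) (g : Euc d → ℝ) (G : Euc d → Euc d)
    (Hg : Euc d → Matrix (Fin d) (Fin d) ℝ) : Prop :=
  (∀ x ∈ s, |g x| ≤ N ∧ ‖G x‖ ≤ N ∧ matNorm (Hg x) ≤ N) ∧
  ∀ x ∈ s, ∀ y ∈ s,
    matNorm (Hg x - Hg y) ≤ N * ‖x - y‖ ^ a ∧
    ‖G x - G y - matVec (Hg y) (x - y)‖ ≤ N * ‖x - y‖ ^ (1 + a) ∧
    |g x - g y - ⟪G y, x - y⟫ - (1/2) * quadForm (Hg y) (x - y)| ≤ N * ‖x - y‖ ^ (2 + a)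

/-- `Ω` is a `C²`-domain near its boundary: every boundary point admits a local `C²`
diffeomorphism flattening the boundary onto the upper half ball. -/
def HasC2Boundary (Ω : Set (Euc d)) : Prop :=
  ∀ z ∈ frontier Ω, ∃ (U : Set (Euc d)) (φ ψ : Euc d → Euc d),
    IsOpen U ∧ z ∈ U ∧
    ContDiffOn ℝ 2 φ U ∧ ContDiffOn ℝ 2 ψ (closure (halfBall d 1)) ∧
    (∀ y ∈ U, ψ (φ y) = y) ∧
    φ '' (U ∩ Ω) = halfBall d 1 ∧
    φ '' (U ∩ frontier Ω) = flatBall d 1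

/-- `Ω` is a `C^{2,a}`-domain near its boundary. -/
def HasC2AlphaBoundary (a : ℝ) (Ω : Set (Euc d)) : Prop :=
  ∀ z ∈ frontier Ω, ∃ (U : Set (Euc d)) (φ ψ : Euc d → Euc d) (Cφ : ℝ),
    IsOpen U ∧ z ∈ U ∧
    ContDiffOn ℝ 2 φ U ∧ ContDiffOn ℝ 2 ψ (closure (halfBall d 1)) ∧
    (∀ x ∈ U, ∀ y ∈ U,
      ‖iteratedFDerivWithin ℝ 2 φ U x - iteratedFDerivWithin ℝ 2 φ U y‖ ≤ Cφ * ‖x - y‖ ^ a) ∧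
    (∀ y ∈ U, ψ (φ y) = y) ∧
    φ '' (U ∩ Ω) = halfBall d 1 ∧
    φ '' (U ∩ frontier Ω) = flatBall d 1

open Filter Topology

lemma lastCoord_apply (hd : 0 < d) (x : Euc d) :
    lastCoord x = x ⟨d - 1, Nat.sub_lt hd Nat.one_pos⟩ := dif_pos hd

lemma mem_closure_halfBall {r : ℝ} (hd : 0 < d) (hr : 0 < r) {x : Euc d}
    (hx : ‖x‖ ≤ r) (hx' : 0 ≤ lastCoord x) : x ∈ closure (halfBall d r) := by
  set jd : Fin d := ⟨d - 1, Nat.sub_lt hd Nat.one_pos⟩ with hjd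
  set e : Euc d := EuclideanSpace.single jd 1 with he
  have key : Tendsto (fun ε : ℝ => (1 - ε) • x + (ε * (r/2)) • e) (𝓝[>] 0) (𝓝 x) := by
    have hc : ContinuousAt (fun ε : ℝ => (1 - ε) • x + (ε * (r/2)) • e) 0 := by fun_prop
    have h0 : (1 - (0:ℝ)) • x + ((0:ℝ) * (r/2)) • e = x := by simp
    have := hc.tendsto
    rw [h0] at this
    exact this.mono_left nhdsWithin_le_nhds
  refine mem_closure_of_tendsto key ?_
  filter_upwards [Ioc_mem_nhdsGT (show (0:ℝ) < 1/2 by norm_num)] with ε hε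
  have hε0 : 0 < ε := hε.1
  have hε1 : ε ≤ 1/2 := hε.2
  have hne : ‖e‖ = 1 := by
    rw [he]; simpa using EuclideanSpace.norm_single (𝕜 := ℝ) jd 1
  constructor
  · have : ‖(1 - ε) • x + (ε * (r/2)) • e‖ ≤ (1 - ε) * ‖x‖ + (ε * (r/2)) := by
      calc ‖(1 - ε) • x + (ε * (r/2)) • e‖ ≤ ‖(1 - ε) • x‖ + ‖(ε * (r/2)) • e‖ :=
            norm_add_le _ _
        _ = |1 - ε| * ‖x‖ + |ε * (r/2)| * ‖e‖ := by rw [norm_smul, norm_smul, Real.norm_eq_abs, Real.norm_eq_abs]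
        _ = (1 - ε) * ‖x‖ + (ε * (r/2)) := by
            rw [hne, abs_of_nonneg (by linarith), abs_of_nonneg (by positivity)]; ring
    have hxnn : 0 ≤ ‖x‖ := norm_nonneg x
    calc ‖(1 - ε) • x + (ε * (r/2)) • e‖ ≤ (1 - ε) * ‖x‖ + (ε * (r/2)) := this
      _ < r := by nlinarith
  · have hcoord : lastCoord ((1 - ε) • x + (ε * (r/2)) • e)
        = (1 - ε) * lastCoord x + ε * (r/2) := by
      rw [lastCoord_apply hd, lastCoord_apply hd]
      simp [he, hjd, EuclideanSpace.single_apply]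
    rw [hcoord]
    have : 0 ≤ (1 - ε) * lastCoord x := by
      apply mul_nonneg (by linarith) hx'
    positivity

lemma line_deriv {u : Euc d → ℝ} {Du : Euc d → Euc d}
    (hgrad : ∀ x ∈ closure (halfBall d 1),
      HasGradientWithinAt u (Du x) (closure (halfBall d 1)) x)
    (x v : Euc d) (c : ℝ) (T : Set ℝ)
    (maps : MapsTo (fun s : ℝ => x + s • v) T (closure (halfBall d 1)))
    {s : ℝ} (hs : s ∈ T) :
    HasDerivWithinAt (fun s : ℝ => u (x + s • v) - s * c)
      (⟪Du (x + s • v), v⟫ - c) T s := by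
  have hγ : HasDerivWithinAt (fun s : ℝ => x + s • v) v T s := by
    have := (((hasDerivAt_id s).smul_const v).const_add x).hasDerivWithinAt (s := T)
    simpa using this
  have hl := (hgrad _ (maps hs)).hasFDerivWithinAt
  have hcomp := hl.comp_hasDerivWithinAt s hγ maps
  have hlin : HasDerivWithinAt (fun s : ℝ => s * c) c T s :=
    (hasDerivAt_mul_const c).hasDerivWithinAt
  have := hcomp.sub hlin
  simp [Function.comp, InnerProductSpace.toDual_apply_apply] at this
  exact this

lemma mvt_line {u : Euc d → ℝ} {Du : Euc d → Euc d}
    (hgrad : ∀ x ∈ closure (halfBall d 1),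
      HasGradientWithinAt u (Du x) (closure (halfBall d 1)) x)
    (x v : Euc d) (c K t : ℝ) (ht : 0 ≤ t)
    (maps : MapsTo (fun s : ℝ => x + s • v) (Icc 0 t) (closure (halfBall d 1)))
    (bound : ∀ s ∈ Icc (0:ℝ) t, |⟪Du (x + s • v), v⟫ - c| ≤ K) :
    |u (x + t • v) - t * c - u x| ≤ K * t := by
  have := (convex_Icc (0:ℝ) t).norm_image_sub_le_of_norm_hasDerivWithin_le
    (f := fun s : ℝ => u (x + s • v) - s * c)
    (f' := fun s : ℝ => ⟪Du (x + s • v), v⟫ - c)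
    (fun s hs => line_deriv hgrad x v c _ maps hs)
    (fun s hs => bound s hs)
    (left_mem_Icc.2 ht) (right_mem_Icc.2 ht)
  simp only [zero_smul, add_zero, zero_mul, sub_zero, Real.norm_eq_abs,
    abs_of_nonneg ht] at this
  exact this


lemma lastCoord_add_smul (hd : 0 < d) (x v : Euc d) (s : ℝ) :
    lastCoord (x + s • v) = lastCoord x + s * lastCoord v := by
  rw [lastCoord_apply hd, lastCoord_apply hd, lastCoord_apply hd]
  simp [smul_eq_mul]


set_option maxHeartbeats 1600000 in
/-- Claim in Lemma 4.1: if the tangential derivatives of `u` admit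
first-order boundary expansions with Hölder coefficients `H_i`, then the restriction of
the normal derivative `∂_d u` to the flat boundary is `C^{1,α}`, with tangential
derivatives `H_i`. -/
theorem normal_derivative_C1alpha_on_boundary
    (d : ℕ) (hd : 1 ≤ d) (α C : ℝ) (hα : 0 < α) (hα1 : α < 1) (hC : 0 < C) :
    ∃ C' : ℝ, 0 < C' ∧
      ∀ (u : Euc d → ℝ) (Du : Euc d → Euc d) (H : Euc d → Euc d),
        -- `u` is continuously differentiable up to the flat boundary, with gradient `Du`
        (∀ x ∈ closure (halfBall d 1),
          HasGradientWithinAt u (Du x) (closure (halfBall d 1)) x) →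
        ContinuousOn Du (closure (halfBall d 1)) →
        -- `u` vanishes on the flat boundary
        (∀ x ∈ flatBall d 1, u x = 0) →
        -- the normal derivative `∂_d u` is `α`-Hölder on the closure of `B_{3/4}⁺`
        (∀ x ∈ closure (halfBall d (3/4)), ∀ y ∈ closure (halfBall d (3/4)),
          |lastCoord (Du x) - lastCoord (Du y)| ≤ C * ‖x - y‖ ^ α) →
        -- the coefficients `H_i` are `α`-Hölder on `B⁰_{3/4}`
        (∀ i : Fin d, (i : ℕ) + 1 < d →
          ∀ x ∈ flatBall d (3/4), ∀ y ∈ flatBall d (3/4),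
            |H x i - H y i| ≤ C * ‖x - y‖ ^ α) →
        -- first-order expansion of the tangential derivatives `∂_i u`
        (∀ i : Fin d, (i : ℕ) + 1 < d →
          ∀ x ∈ halfBall d 1, ∀ x₀ ∈ flatBall d (3/4),
            |Du x i - H x₀ i * lastCoord x| ≤ C * ‖x - x₀‖ ^ (1 + α)) →
        -- conclusion: `∂_d u` restricted to `B⁰_{3/4}` is `C^{1,α}`, with
        -- tangential derivatives given by `H`
        ∀ x₀ ∈ flatBall d (3/4), ∀ i : Fin d, (i : ℕ) + 1 < d →
          ∀ h : ℝ, 0 < h → x₀ + h • EuclideanSpace.single i 1 ∈ flatBall d (3/4) →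
            |lastCoord (Du (x₀ + h • EuclideanSpace.single i 1)) - lastCoord (Du x₀) -
              h * H x₀ i| ≤ C' * h ^ (1 + α) := by
  refine ⟨C + 1, by linarith, ?_⟩
  intro u Du H hgrad _hDu hu0 hHolDu hHolH hexp x₀ hx₀0 i hi h hh hx₁0
  have hd0 : 0 < d := hd
  set jd : Fin d := ⟨d - 1, Nat.sub_lt hd0 Nat.one_pos⟩ with hjd
  set ed : Euc d := EuclideanSpace.single jd 1 with hed
  set ei : Euc d := EuclideanSpace.single i 1 with heid
  set x₁ : Euc d := x₀ + h • ei with hx1def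
  have hinej : i ≠ jd := by
    intro hij
    have h1 := congrArg Fin.val hij
    simp only [hjd] at h1
    omega
  have heicoord : ei jd = 0 := by
    rw [heid, EuclideanSpace.single_apply, if_neg (Ne.symm hinej)]
  have hedcoord : ed jd = 1 := by
    rw [hed, EuclideanSpace.single_apply, if_pos rfl]
  have hnei : ‖ei‖ = 1 := by
    rw [heid]; simpa using EuclideanSpace.norm_single (𝕜 := ℝ) i 1
  have hned : ‖ed‖ = 1 := by
    rw [hed]; simpa using EuclideanSpace.norm_single (𝕜 := ℝ) jd 1
  have hlced : lastCoord ed = 1 := by rw [lastCoord_apply hd0]; exact hedcoord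
  have hlcei : lastCoord ei = 0 := by rw [lastCoord_apply hd0]; exact heicoord
  have hx₀c : lastCoord x₀ = 0 := hx₀0.2
  have hx₁c : lastCoord x₁ = 0 := hx₁0.2
  have hx₀n : ‖x₀‖ < 3/4 := hx₀0.1
  have hx₁n : ‖x₁‖ < 3/4 := hx₁0.1
  set M : ℝ := max ‖x₀‖ ‖x₁‖ with hM
  have hM34 : M < 3/4 := max_lt hx₀n hx₁n
  have hM0 : 0 ≤ M := le_trans (norm_nonneg _) (le_max_left _ _)
  set T : ℝ := min (3/4 - M) (1/4) with hT
  have hT0 : 0 < T := lt_min (by linarith) (by norm_num)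
  have hsub : closure (halfBall d (3/4)) ⊆ closure (halfBall d 1) :=
    closure_mono (fun z hz => ⟨lt_of_lt_of_le hz.1 (by norm_num), hz.2⟩)
  -- inner products with basis vectors
  have hproj : ∀ w : Euc d, ⟪w, ed⟫ = lastCoord w := by
    intro w
    rw [hed, lastCoord_apply hd0]
    simpa using EuclideanSpace.inner_single_right (𝕜 := ℝ) jd 1 w
  have hproji : ∀ w : Euc d, ⟪w, ei⟫ = w i := by
    intro w
    rw [heid]
    simpa using EuclideanSpace.inner_single_right (𝕜 := ℝ) i 1 w
  -- convex combination bound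
  have hcomb : ∀ s ∈ Icc (0:ℝ) h, ‖x₀ + s • ei‖ ≤ M := by
    intro s hs
    have hh' : h ≠ 0 := ne_of_gt hh
    have hdm : (s/h) * h = s := div_mul_cancel₀ s hh'
    have hrep : x₀ + s • ei = (1 - s/h) • x₀ + (s/h) • x₁ := by
      rw [hx1def, smul_add, smul_smul, hdm]
      module
    have h1 : (0:ℝ) ≤ s/h := div_nonneg hs.1 hh.le
    have h2 : s/h ≤ 1 := (div_le_one hh).2 hs.2
    rw [hrep]
    calc ‖(1 - s/h) • x₀ + (s/h) • x₁‖ ≤ ‖(1 - s/h) • x₀‖ + ‖(s/h) • x₁‖ := norm_add_le _ _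
      _ = (1 - s/h) * ‖x₀‖ + (s/h) * ‖x₁‖ := by
          rw [norm_smul, norm_smul, Real.norm_eq_abs, Real.norm_eq_abs,
            abs_of_nonneg (by linarith), abs_of_nonneg h1]
      _ ≤ (1 - s/h) * M + (s/h) * M := by
          have := le_max_left ‖x₀‖ ‖x₁‖
          have := le_max_right ‖x₀‖ ‖x₁‖
          have hn0 : (0:ℝ) ≤ ‖x₀‖ := norm_nonneg _
          have hn1 : (0:ℝ) ≤ ‖x₁‖ := norm_nonneg _
          nlinarith
      _ = M := by ring
  set A : ℝ := lastCoord (Du x₁) - lastCoord (Du x₀) - h * H x₀ i with hA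
  have key : ∀ t : ℝ, t ∈ Ioc (0:ℝ) T → |A| ≤ (2*C + C*h) * t ^ α + C * h ^ (1+α) := by
    intro t ht
    obtain ⟨ht0, htT⟩ := ht
    have htM : M + t ≤ 3/4 := by
      have := le_trans htT (min_le_left (3/4 - M) (1/4))
      linarith
    have ht14 : t ≤ 1/4 := le_trans htT (min_le_right _ _)
    -- vertical estimate
    have vert : ∀ y : Euc d, ‖y‖ ≤ M → lastCoord y = 0 →
        |u (y + t • ed) - t * lastCoord (Du y) - u y| ≤ (C * t ^ α) * t := by
      intro y hyM hyc
      have hmem34 : ∀ s ∈ Icc (0:ℝ) t, y + s • ed ∈ closure (halfBall d (3/4)) := by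
        intro s hs
        apply mem_closure_halfBall hd0 (by norm_num)
        · calc ‖y + s • ed‖ ≤ ‖y‖ + ‖s • ed‖ := norm_add_le _ _
            _ = ‖y‖ + s := by
                rw [norm_smul, Real.norm_eq_abs, hned, abs_of_nonneg hs.1, mul_one]
            _ ≤ M + t := by linarith [hs.2]
            _ ≤ 3/4 := htM
        · rw [lastCoord_add_smul hd0, hyc, hlced]
          simpa using hs.1
      have hy34 : y ∈ closure (halfBall d (3/4)) := by
        have := hmem34 0 (left_mem_Icc.2 ht0.le)
        simpa using this
      have maps : MapsTo (fun s : ℝ => y + s • ed) (Icc 0 t) (closure (halfBall d 1)) :=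
        fun s hs => hsub (hmem34 s hs)
      have bound : ∀ s ∈ Icc (0:ℝ) t,
          |⟪Du (y + s • ed), ed⟫ - lastCoord (Du y)| ≤ C * t ^ α := by
        intro s hs
        rw [hproj]
        have h1 := hHolDu (y + s • ed) (hmem34 s hs) y hy34
        have h2 : ‖(y + s • ed) - y‖ = s := by
          rw [add_sub_cancel_left, norm_smul, Real.norm_eq_abs, hned,
            abs_of_nonneg hs.1, mul_one]
        rw [h2] at h1
        refine h1.trans ?_
        have : s ^ α ≤ t ^ α := Real.rpow_le_rpow hs.1 hs.2 hα.le
        exact mul_le_mul_of_nonneg_left this hC.le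
      exact mvt_line hgrad y ed (lastCoord (Du y)) (C * t ^ α) t ht0.le maps bound
    -- horizontal estimate
    have horiz : |u (x₀ + t • ed + h • ei) - h * (t * H x₀ i) - u (x₀ + t • ed)|
        ≤ (C * t ^ (1+α) + C * (t * h ^ α)) * h := by
      have hmem1 : ∀ s ∈ Icc (0:ℝ) h, x₀ + t • ed + s • ei ∈ halfBall d 1 := by
        intro s hs
        have heq : x₀ + t • ed + s • ei = (x₀ + s • ei) + t • ed := by abel
        constructor
        · rw [heq]
          calc ‖(x₀ + s • ei) + t • ed‖ ≤ ‖x₀ + s • ei‖ + ‖t • ed‖ := norm_add_le _ _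
            _ ≤ M + t := by
                have := hcomb s hs
                rw [norm_smul, Real.norm_eq_abs, hned, abs_of_nonneg ht0.le, mul_one]
                linarith
            _ < 1 := by linarith
        · rw [heq, lastCoord_add_smul hd0, lastCoord_add_smul hd0, hx₀c, hlcei, hlced]
          simpa using ht0
      have maps : MapsTo (fun s : ℝ => (x₀ + t • ed) + s • ei) (Icc 0 h)
          (closure (halfBall d 1)) :=
        fun s hs => subset_closure (hmem1 s hs)
      have bound : ∀ s ∈ Icc (0:ℝ) h,
          |⟪Du ((x₀ + t • ed) + s • ei), ei⟫ - t * H x₀ i|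
            ≤ C * t ^ (1+α) + C * (t * h ^ α) := by
        intro s hs
        rw [hproji]
        set q : Euc d := (x₀ + t • ed) + s • ei with hq
        set y : Euc d := x₀ + s • ei with hy
        have hyflat : y ∈ flatBall d (3/4) := by
          constructor
          · exact lt_of_le_of_lt (hcomb s hs) hM34
          · rw [hy, lastCoord_add_smul hd0, hx₀c, hlcei]; ring
        have hlcq : lastCoord q = t := by
          rw [hq, lastCoord_add_smul hd0, lastCoord_add_smul hd0, hx₀c, hlcei, hlced]; ring
        have hqy : q - y = t • ed := by rw [hq, hy]; abel
        have h1 := hexp i hi q (hmem1 s hs) y hyflat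
        rw [hlcq, hqy] at h1
        have hnt : ‖t • ed‖ = t := by
          rw [norm_smul, Real.norm_eq_abs, hned, abs_of_nonneg ht0.le, mul_one]
        rw [hnt] at h1
        have h2 := hHolH i hi y hyflat x₀ hx₀0
        have hyx : ‖y - x₀‖ = s := by
          rw [hy, add_sub_cancel_left, norm_smul, Real.norm_eq_abs, hnei,
            abs_of_nonneg hs.1, mul_one]
        rw [hyx] at h2
        have h3 : s ^ α ≤ h ^ α := Real.rpow_le_rpow hs.1 hs.2 hα.le
        calc |Du q i - t * H x₀ i|
            ≤ |Du q i - H y i * t| + |H y i * t - t * H x₀ i| := by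
              have hsplit : Du q i - t * H x₀ i
                  = (Du q i - H y i * t) + (H y i * t - t * H x₀ i) := by ring
              rw [hsplit]; exact abs_add_le _ _
          _ ≤ C * t ^ (1+α) + C * (t * h ^ α) := by
              have h4' : H y i * t - t * H x₀ i = (H y i - H x₀ i) * t := by ring
              rw [h4', abs_mul, abs_of_nonneg ht0.le]
              have h5 : |H y i - H x₀ i| * t ≤ (C * s ^ α) * t := by
                apply mul_le_mul_of_nonneg_right h2 ht0.le
              have h6 : (C * s ^ α) * t ≤ C * (t * h ^ α) := by
                have h7 : C * s ^ α ≤ C * h ^ α := mul_le_mul_of_nonneg_left h3 hC.le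
                calc (C * s ^ α) * t ≤ (C * h ^ α) * t :=
                      mul_le_mul_of_nonneg_right h7 ht0.le
                  _ = C * (t * h ^ α) := by ring
              exact add_le_add h1 (h5.trans h6)
      exact mvt_line hgrad (x₀ + t • ed) ei (t * H x₀ i) _ h hh.le maps bound
    -- combine
    have hv0 := vert x₀ (le_max_left _ _) hx₀c
    have hv1 := vert x₁ (le_max_right _ _) hx₁c
    have hpt : x₁ + t • ed = x₀ + t • ed + h • ei := by rw [hx1def]; abel
    rw [hpt] at hv1
    have hu00 : u x₀ = 0 := hu0 x₀ ⟨by linarith, hx₀c⟩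
    have hu10 : u x₁ = 0 := hu0 x₁ ⟨by linarith, hx₁c⟩
    rw [hu00, sub_zero] at hv0
    rw [hu10, sub_zero] at hv1
    have e1 : t ^ (1+α) = t * t ^ α := by
      rw [Real.rpow_add ht0, Real.rpow_one]
    have e2 : h ^ (1+α) = h * h ^ α := by
      rw [Real.rpow_add hh, Real.rpow_one]
    have habs : |t * A| ≤ (C * t ^ α) * t + (C * t ^ α) * t
        + (C * t ^ (1+α) + C * (t * h ^ α)) * h := by
      have hid : t * A = -(u (x₀ + t • ed + h • ei) - t * lastCoord (Du x₁))
          + (u (x₀ + t • ed) - t * lastCoord (Du x₀))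
          + (u (x₀ + t • ed + h • ei) - h * (t * H x₀ i) - u (x₀ + t • ed)) := by
        rw [hA]; ring
      rw [hid]
      calc |_ + _ + _| ≤ |-(u (x₀ + t • ed + h • ei) - t * lastCoord (Du x₁))|
            + |u (x₀ + t • ed) - t * lastCoord (Du x₀)|
            + |u (x₀ + t • ed + h • ei) - h * (t * H x₀ i) - u (x₀ + t • ed)| :=
          abs_add_three _ _ _
        _ ≤ (C * t ^ α) * t + (C * t ^ α) * t
            + (C * t ^ (1+α) + C * (t * h ^ α)) * h := by
            rw [abs_neg]
            exact add_le_add (add_le_add hv1 hv0) horiz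
    have h2 : t * |A| ≤ t * ((2*C + C*h) * t ^ α + C * h ^ (1+α)) := by
      rw [abs_mul, abs_of_pos ht0] at habs
      calc t * |A| ≤ (C * t ^ α) * t + (C * t ^ α) * t
          + (C * t ^ (1+α) + C * (t * h ^ α)) * h := habs
        _ = t * ((2*C + C*h) * t ^ α + C * h ^ (1+α)) := by rw [e1, e2]; ring
    exact le_of_mul_le_mul_left h2 ht0
  -- pass to the limit t → 0⁺
  have hlim : Filter.Tendsto (fun t : ℝ => (2*C + C*h) * t ^ α + C * h ^ (1+α)) (𝓝[>] 0)
      (𝓝 (C * h ^ (1+α))) := by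
    have h1 : Filter.Tendsto (fun t : ℝ => t ^ α) (𝓝 0) (𝓝 ((0:ℝ) ^ α)) :=
      (Real.continuousAt_rpow_const 0 α (Or.inr hα.le)).tendsto
    rw [Real.zero_rpow (ne_of_gt hα)] at h1
    have h2 := ((h1.const_mul (2*C + C*h)).add
      (tendsto_const_nhds (x := C * h ^ (1+α)))).mono_left
      (nhdsWithin_le_nhds : 𝓝[>] (0:ℝ) ≤ 𝓝 0)
    simpa using h2
  have hfin : |A| ≤ C * h ^ (1+α) := by
    apply ge_of_tendsto hlim
    filter_upwards [Ioc_mem_nhdsGT hT0] with t ht using key t ht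
  have hpow : 0 ≤ h ^ (1+α) := Real.rpow_nonneg hh.le _
  calc |A| ≤ C * h ^ (1+α) := hfin
    _ ≤ (C + 1) * h ^ (1+α) := by nlinarith
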